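/- For any r_0, d, T, c_1, c_2 > 0 there exists a step size η with 0 < η ≤ 1/d such that Φ(η) := r_0/(Tη) + η c_1 + η² c_2 ≤ d r_0/T + 2√(r_0 c_1/T) + 2 (r_0² c_2/T²)^{1/3}. In particular, the choice η_0 = min{1/d, √(r_0/(c_1 T)), (r_0/(c_2 T))^{1/3}} satisfies this bound. -/

import Mathlib

lemma statement11_aux (r0 d T c1 c2 : ℝ)
    (hr0 : 0 < r0) (hd : 0 < d) (hT : 0 < T) (hc1 : 0 < c1) (hc2 : 0 < c2) :
    0 < min (1 / d) (min (Real.sqrt (r0 / (c1 * T))) ((r0 / (c2 * T)) ^ ((1 : ℝ) / 3))) ∧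
      min (1 / d) (min (Real.sqrt (r0 / (c1 * T))) ((r0 / (c2 * T)) ^ ((1 : ℝ) / 3))) ≤ 1 / d ∧
      r0 / (T * min (1 / d) (min (Real.sqrt (r0 / (c1 * T))) ((r0 / (c2 * T)) ^ ((1 : ℝ) / 3))))
          + min (1 / d) (min (Real.sqrt (r0 / (c1 * T))) ((r0 / (c2 * T)) ^ ((1 : ℝ) / 3))) * c1
          + (min (1 / d) (min (Real.sqrt (r0 / (c1 * T))) ((r0 / (c2 * T)) ^ ((1 : ℝ) / 3)))) ^ 2 * c2
        ≤ d * r0 / T + 2 * Real.sqrt (r0 * c1 / T)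
          + 2 * (r0 ^ 2 * c2 / T ^ 2) ^ ((1 : ℝ) / 3) := by
  set a := Real.sqrt (r0 / (c1 * T)) with ha_def
  set b := (r0 / (c2 * T)) ^ ((1 : ℝ) / 3) with hb_def
  set A := Real.sqrt (r0 * c1 / T) with hA_def
  set B := (r0 ^ 2 * c2 / T ^ 2) ^ ((1 : ℝ) / 3) with hB_def
  have hxa : (0:ℝ) < r0 / (c1 * T) := by positivity
  have ha : 0 < a := Real.sqrt_pos.mpr hxa
  have hb : 0 < b := Real.rpow_pos_of_pos (by positivity) _
  have hA : 0 < A := Real.sqrt_pos.mpr (by positivity)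
  have hB : 0 < B := Real.rpow_pos_of_pos (by positivity) _
  set η := min (1 / d) (min a b) with hη_def
  have hη : 0 < η := lt_min (by positivity) (lt_min ha hb)
  refine ⟨hη, min_le_left _ _, ?_⟩
  -- key algebraic identities
  have haA : a * A = r0 / T := by
    rw [ha_def, hA_def, ← Real.sqrt_mul hxa.le]
    rw [show r0 / (c1 * T) * (r0 * c1 / T) = (r0 / T) ^ 2 by field_simp]
    exact Real.sqrt_sq (by positivity)
  have hbB : b * B = r0 / T := by
    rw [hb_def, hB_def, ← Real.mul_rpow (by positivity) (by positivity)]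
    rw [show r0 / (c2 * T) * (r0 ^ 2 * c2 / T ^ 2) = (r0 / T) ^ (3:ℕ) by field_simp]
    rw [← Real.rpow_natCast (r0/T) 3, ← Real.rpow_mul (by positivity)]
    norm_num
  have hac1 : a * c1 = A := by
    rw [ha_def, hA_def, show r0 * c1 / T = r0 / (c1 * T) * c1 ^ 2 by field_simp,
      Real.sqrt_mul hxa.le, Real.sqrt_sq hc1.le]
  have hb3 : b ^ (3:ℕ) = r0 / (c2 * T) := by
    rw [hb_def, ← Real.rpow_natCast ((r0 / (c2*T)) ^ ((1:ℝ)/3)) 3,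
      ← Real.rpow_mul (by positivity)]
    norm_num
  have hbc2 : b ^ 2 * c2 = B := by
    have h3 : (b ^ 2 * c2) ^ (3:ℕ) = r0 ^ 2 * c2 / T ^ 2 := by
      rw [show (b ^ 2 * c2) ^ (3:ℕ) = (b ^ (3:ℕ)) ^ 2 * c2 ^ 3 by ring, hb3]
      field_simp
    rw [hB_def, ← h3, ← Real.rpow_natCast (b ^ 2 * c2) 3, ← Real.rpow_mul (by positivity)]
    norm_num
  -- bound each term
  have h1 : r0 / (T * η) ≤ d * r0 / T + A + B := by
    rcases min_choice (1/d) (min a b) with h | h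
    · rw [hη_def, h]
      have : r0 / (T * (1/d)) = d * r0 / T := by field_simp
      rw [this]; linarith
    · rcases min_choice a b with h2 | h2
      · rw [hη_def, h, h2]
        have : r0 / (T * a) = A := by
          field_simp
          rw [show T * a * A = T * (a * A) by ring, haA]; field_simp
        rw [this]
        have : 0 < d * r0 / T := by positivity
        linarith
      · rw [hη_def, h, h2]
        have : r0 / (T * b) = B := by
          field_simp
          rw [show T * b * B = T * (b * B) by ring, hbB]; field_simp
        rw [this]
        have : 0 < d * r0 / T := by positivity
        linarith
  have hηa : η ≤ a := le_trans (min_le_right _ _) (min_le_left _ _)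
  have hηb : η ≤ b := le_trans (min_le_right _ _) (min_le_right _ _)
  have h2 : η * c1 ≤ A := by
    rw [← hac1]; exact mul_le_mul_of_nonneg_right hηa hc1.le
  have h3 : η ^ 2 * c2 ≤ B := by
    rw [← hbc2]
    exact mul_le_mul_of_nonneg_right (pow_le_pow_left₀ hη.le hηb 2) hc2.le
  linarith

theorem statement11 (r0 d T c1 c2 : ℝ)
    (hr0 : 0 < r0) (hd : 0 < d) (hT : 0 < T) (hc1 : 0 < c1) (hc2 : 0 < c2) :
    (∃ η : ℝ, 0 < η ∧ η ≤ 1 / d ∧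
      r0 / (T * η) + η * c1 + η ^ 2 * c2
        ≤ d * r0 / T + 2 * Real.sqrt (r0 * c1 / T)
          + 2 * (r0 ^ 2 * c2 / T ^ 2) ^ ((1 : ℝ) / 3)) ∧
    (0 < min (1 / d) (min (Real.sqrt (r0 / (c1 * T))) ((r0 / (c2 * T)) ^ ((1 : ℝ) / 3))) ∧
      min (1 / d) (min (Real.sqrt (r0 / (c1 * T))) ((r0 / (c2 * T)) ^ ((1 : ℝ) / 3))) ≤ 1 / d ∧
      r0 / (T * min (1 / d) (min (Real.sqrt (r0 / (c1 * T))) ((r0 / (c2 * T)) ^ ((1 : ℝ) / 3))))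
          + min (1 / d) (min (Real.sqrt (r0 / (c1 * T))) ((r0 / (c2 * T)) ^ ((1 : ℝ) / 3))) * c1
          + (min (1 / d) (min (Real.sqrt (r0 / (c1 * T))) ((r0 / (c2 * T)) ^ ((1 : ℝ) / 3)))) ^ 2 * c2
        ≤ d * r0 / T + 2 * Real.sqrt (r0 * c1 / T)
          + 2 * (r0 ^ 2 * c2 / T ^ 2) ^ ((1 : ℝ) / 3)) := by
  obtain ⟨h1, h2, h3⟩ := statement11_aux r0 d T c1 c2 hr0 hd hT hc1 hc2
  exact ⟨⟨_, h1, h2, h3⟩, h1, h2, h3⟩
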